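/- arXiv:1104.4410 — 4 statements merged into one kernel-verified Lean document; each statement's English description precedes it below -/
import Mathlib

section
/- Let (Ω, F, μ) be a probability space, ε : Ω → ℝ and V : Ω → ℝ^{p} × ℝ^{d} independent random elements, X : Ω → ℝ a square-integrable measurable function of V, m the σ-algebra generated by the second component Z of V, H a closed linear subspace of L²(μ) all of whose elements are (a.e. strongly) m-measurable, and η = P_H(E[X|m]). Let φ : ℝ → ℝ be Borel measurable with φ(ε) square-integrable, and set I_φ = E[φ(ε)²]. Then for every δ ∈ H: E[(φ(ε)(X + δ))²] = I_φ · E[(X + δ)²] ≥ I_φ · E[(X − η)²], and if I_φ > 0 equality holds if and only if δ = −η in L²(μ). -/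
open MeasureTheory

section Aux

variable {Ω : Type*} {F : MeasurableSpace Ω} {μ : Measure Ω}

lemma integral_sq_eq_norm_sq (f : Lp ℝ 2 μ) : ∫ ω, (f : Ω → ℝ) ω ^ 2 ∂μ = ‖f‖ ^ 2 := by
  have h1 : (inner ℝ f f : ℝ) = ∫ ω, inner ℝ ((f : Ω → ℝ) ω) ((f : Ω → ℝ) ω) ∂μ :=
    L2.inner_def f f
  calc ∫ ω, (f : Ω → ℝ) ω ^ 2 ∂μ
      = ∫ ω, (inner ℝ ((f : Ω → ℝ) ω) ((f : Ω → ℝ) ω) : ℝ) ∂μ := by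
        refine integral_congr_ae (Filter.Eventually.of_forall fun ω => ?_)
        simp [sq]
    _ = (inner ℝ f f : ℝ) := h1.symm
    _ = ‖f‖ ^ 2 := real_inner_self_eq_norm_sq f

end Aux

/-- Fisher information of a parametric submodel in direction `δ`:
`E[(φ(ε)(X + δ))²] = I_φ · E[(X + δ)²] ≥ I_φ · E[(X − η)²]`, where `η = P_H(E[X|m])`,
with equality (for `I_φ > 0`) iff `δ = −η` in `L²(μ)`. -/
theorem stmt2 {Ω : Type*} {F : MeasurableSpace Ω} (μ : Measure Ω) [IsProbabilityMeasure μ]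
    {p d : ℕ}
    (ε : Ω → ℝ) (V : Ω → (Fin p → ℝ) × (Fin d → ℝ))
    (hε : Measurable ε) (hV : Measurable V)
    (hindep : ProbabilityTheory.IndepFun ε V μ)
    (X : Ω → ℝ) (hX : MemLp X 2 μ)
    (hXV : Measurable[MeasurableSpace.comap V inferInstance] X)
    (m : MeasurableSpace Ω)
    (hmdef : m = MeasurableSpace.comap (fun ω => (V ω).2) inferInstance)
    (hm : m ≤ F)
    (H : Submodule ℝ (Lp ℝ 2 μ)) (hH : IsClosed (H : Set (Lp ℝ 2 μ))) [CompleteSpace H]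
    (hHmeas : ∀ f : Lp ℝ 2 μ, f ∈ H → AEStronglyMeasurable[m] (f : Ω → ℝ) μ)
    (η : Lp ℝ 2 μ)
    (hη : η = (H.orthogonalProjectionOnto (condExpL2 ℝ ℝ hm (hX.toLp X) : Lp ℝ 2 μ) : Lp ℝ 2 μ))
    (φ : ℝ → ℝ) (hφ : Measurable φ) (hφε : MemLp (fun ω => φ (ε ω)) 2 μ)
    (Iφ : ℝ) (hIφ : Iφ = ∫ ω, φ (ε ω) ^ 2 ∂μ) :
    ∀ δ : Lp ℝ 2 μ, δ ∈ H →
      (∫ ω, (φ (ε ω) * (X ω + (δ : Ω → ℝ) ω)) ^ 2 ∂μ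
          = Iφ * ∫ ω, (X ω + (δ : Ω → ℝ) ω) ^ 2 ∂μ) ∧
      Iφ * ∫ ω, (X ω - (η : Ω → ℝ) ω) ^ 2 ∂μ
        ≤ ∫ ω, (φ (ε ω) * (X ω + (δ : Ω → ℝ) ω)) ^ 2 ∂μ ∧
      (0 < Iφ →
        ((∫ ω, (φ (ε ω) * (X ω + (δ : Ω → ℝ) ω)) ^ 2 ∂μ
            = Iφ * ∫ ω, (X ω - (η : Ω → ℝ) ω) ^ 2 ∂μ) ↔ δ = -η)) := by
  intro δ hδ
  set Y : Lp ℝ 2 μ := hX.toLp X with hYdef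
  have hYX : (Y : Ω → ℝ) =ᵐ[μ] X := hX.coeFn_toLp
  set ξ : Lp ℝ 2 μ := (condExpL2 ℝ ℝ hm Y : Lp ℝ 2 μ) with hξdef
  -- m ≤ comap V
  have hmV : m ≤ MeasurableSpace.comap V inferInstance := by
    rw [hmdef]
    have h1 : (fun ω => (V ω).2) = Prod.snd ∘ V := rfl
    rw [h1, ← MeasurableSpace.comap_comp]
    exact MeasurableSpace.comap_mono (measurable_iff_comap_le.mp measurable_snd)
  -- measurable version of δ
  obtain ⟨δ', hδ'sm, hδδ'⟩ := hHmeas δ hδ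
  have hδ'V : Measurable[MeasurableSpace.comap V inferInstance] δ' :=
    (hδ'sm.measurable).mono hmV le_rfl
  have hδ'mem : MemLp δ' 2 μ := (Lp.memLp δ).ae_eq hδδ'
  -- independence of φ(ε)^2 and (X + δ')^2
  have hindep2 : ProbabilityTheory.IndepFun (fun ω => φ (ε ω) ^ 2)
      (fun ω => (X ω + δ' ω) ^ 2) μ := by
    rw [ProbabilityTheory.IndepFun_iff_Indep]
    rw [ProbabilityTheory.IndepFun_iff_Indep] at hindep
    have h1 : MeasurableSpace.comap (fun ω => φ (ε ω) ^ 2) inferInstance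
        ≤ MeasurableSpace.comap ε inferInstance := by
      have he : (fun ω => φ (ε ω) ^ 2) = (fun t => φ t ^ 2) ∘ ε := rfl
      rw [he, ← MeasurableSpace.comap_comp]
      exact MeasurableSpace.comap_mono (measurable_iff_comap_le.mp (hφ.pow_const 2))
    have h2 : MeasurableSpace.comap (fun ω => (X ω + δ' ω) ^ 2) inferInstance
        ≤ MeasurableSpace.comap V inferInstance :=
      measurable_iff_comap_le.mp ((hXV.add hδ'V).pow_const 2)
    exact ProbabilityTheory.indep_of_indep_of_le_right
      (ProbabilityTheory.indep_of_indep_of_le_left hindep h1) h2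
  -- product formula
  have hXδ'mem : MemLp (fun ω => X ω + δ' ω) 2 μ := hX.add hδ'mem
  have hint1 : Integrable (fun ω => φ (ε ω) ^ 2) μ := hφε.integrable_sq
  have hint2 : Integrable (fun ω => (X ω + δ' ω) ^ 2) μ := hXδ'mem.integrable_sq
  have hmul : ∫ ω, (φ (ε ω) ^ 2) * ((X ω + δ' ω) ^ 2) ∂μ
      = (∫ ω, φ (ε ω) ^ 2 ∂μ) * ∫ ω, (X ω + δ' ω) ^ 2 ∂μ :=
    ProbabilityTheory.IndepFun.integral_fun_mul_eq_mul_integral hindep2 hint1.aestronglyMeasurable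
      hint2.aestronglyMeasurable
  have hae2 : (fun ω => (X ω + (δ : Ω → ℝ) ω) ^ 2) =ᵐ[μ] fun ω => (X ω + δ' ω) ^ 2 := by
    filter_upwards [hδδ'] with ω hω; rw [hω]
  have hae1 : (fun ω => (φ (ε ω) * (X ω + (δ : Ω → ℝ) ω)) ^ 2)
      =ᵐ[μ] fun ω => (φ (ε ω) ^ 2) * ((X ω + δ' ω) ^ 2) := by
    filter_upwards [hδδ'] with ω hω; rw [hω]; ring
  have part1 : ∫ ω, (φ (ε ω) * (X ω + (δ : Ω → ℝ) ω)) ^ 2 ∂μ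
      = Iφ * ∫ ω, (X ω + (δ : Ω → ℝ) ω) ^ 2 ∂μ := by
    rw [integral_congr_ae hae1, integral_congr_ae hae2, hmul, hIφ]
  -- orthogonality: Y - η ⟂ H
  have horth : ∀ h : Lp ℝ 2 μ, h ∈ H → (inner ℝ (Y - η) h : ℝ) = 0 := by
    intro h hh
    have h1 : (inner ℝ (Y - ξ) h : ℝ) = 0 := by
      have hc := inner_condExpL2_eq_inner_fun (E := ℝ) (𝕜 := ℝ) hm Y h (hHmeas h hh)
      rw [inner_sub_left, ← hξdef] at *
      rw [hc]; ring
    have h2 : (inner ℝ (ξ - η) h : ℝ) = 0 := by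
      have hmem : ξ - η ∈ Hᗮ := by
        rw [hη]
        exact Submodule.sub_starProjection_mem_orthogonal (K := H) ξ
      exact (Submodule.mem_orthogonal' H _).mp hmem h hh
    have hsplit : Y - η = (Y - ξ) + (ξ - η) := by abel
    rw [hsplit, inner_add_left, h1, h2, add_zero]
  have hηH : η ∈ H := by rw [hη]; exact (H.orthogonalProjectionOnto ξ).2
  have hδηH : η + δ ∈ H := H.add_mem hηH hδ
  have hpyth : ‖Y + δ‖ ^ 2 = ‖Y - η‖ ^ 2 + ‖η + δ‖ ^ 2 := by
    have hd : Y + δ = (Y - η) + (η + δ) := by abel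
    rw [hd, norm_add_sq_real, horth _ hδηH]
    ring
  -- integral identifications
  have hIA : ∫ ω, (X ω + (δ : Ω → ℝ) ω) ^ 2 ∂μ = ‖Y + δ‖ ^ 2 := by
    rw [← integral_sq_eq_norm_sq (Y + δ)]
    refine integral_congr_ae ?_
    filter_upwards [hYX, Lp.coeFn_add Y δ] with ω h1 h2
    rw [h2, Pi.add_apply, h1]
  have hIB : ∫ ω, (X ω - (η : Ω → ℝ) ω) ^ 2 ∂μ = ‖Y - η‖ ^ 2 := by
    rw [← integral_sq_eq_norm_sq (Y - η)]
    refine integral_congr_ae ?_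
    filter_upwards [hYX, Lp.coeFn_sub Y η] with ω h1 h2
    rw [h2, Pi.sub_apply, h1]
  have hIφ0 : 0 ≤ Iφ := hIφ ▸ integral_nonneg fun ω => sq_nonneg _
  refine ⟨part1, ?_, ?_⟩
  · rw [part1]
    refine mul_le_mul_of_nonneg_left ?_ hIφ0
    rw [hIA, hIB, hpyth]
    exact le_add_of_nonneg_right (sq_nonneg _)
  · intro hpos
    constructor
    · intro heq
      rw [part1] at heq
      have hAB := mul_left_cancel₀ (ne_of_gt hpos) heq
      rw [hIA, hIB, hpyth] at hAB
      have h0 : ‖η + δ‖ ^ 2 = 0 := by linarith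
      have h0' : η + δ = 0 := by
        have := (pow_eq_zero_iff two_ne_zero).mp h0
        exact norm_eq_zero.mp this
      exact eq_neg_of_add_eq_zero_right h0'
    · intro hδeq
      rw [part1, hIA, hIB, hpyth, hδeq]
      simp
end

section
/- Let (Ω, F, μ) be a probability space, m ⊆ F a sub-σ-algebra, H a closed linear subspace of L²(μ) all of whose elements are (a.e. strongly) m-measurable, X₁, …, X_p ∈ L²(μ), and η_i = P_H(E[X_i|m]) with P_H the orthogonal projection onto H. Fix c > 0 and define the p×p matrices A with entries A_{ij} = c · ∫ (X_i − η_i)(X_j − η_j) dμ and B with entries B_{ij} = c · ∫ (X_i − E[X_i|m])(X_j − E[X_j|m]) dμ. If B is positive definite, then A is positive definite, B⁻¹ − A⁻¹ is positive semidefinite, and A⁻¹ = B⁻¹ if and only if η_i = E[X_i|m] in L²(μ) (i.e., μ-a.e.) for every i = 1, …, p. -/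
open MeasureTheory
open scoped Matrix

private lemma invdiff {R : Type*} [Ring R] (a b p q : R)
    (hap : a * p = 1) (hpa : p * a = 1) (hbq : b * q = 1) (hqb : q * b = 1) :
    q - p = p * (a - b) * p + p * (a - b) * q * (a - b) * p := by
  have e1 : p * (a - b) = 1 - p * b := by rw [mul_sub, hpa]
  have e2 : p * (a - b) * q = q - p := by
    rw [e1, sub_mul, one_mul, mul_assoc, hbq, mul_one]
  rw [e2, e1, sub_mul, one_mul]
  have e3 : (q - p) * (a - b) = q * a - 1 - (1 - p * b) := by
    rw [sub_mul, mul_sub, mul_sub, hqb, hpa]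
  rw [e3]
  have e4 : (q * a - 1 - (1 - p * b)) * p = q - p - (p - p * b * p) := by
    rw [sub_mul, sub_mul, sub_mul, one_mul, mul_assoc q a p, hap, mul_one]
  rw [e4]
  abel


/-- Theorem 2 of the paper: with `A_{ij} = c·∫(Xᵢ−ηᵢ)(Xⱼ−ηⱼ)dμ` (information bound in the
partially linear additive model) and `B_{ij} = c·∫(Xᵢ−E[Xᵢ|m])(Xⱼ−E[Xⱼ|m])dμ` (partially
linear model), if `B` is positive definite then `A` is positive definite, `B⁻¹ − A⁻¹` is
positive semidefinite, and `A⁻¹ = B⁻¹` iff `ηᵢ = E[Xᵢ|m]` in `L²(μ)` for every `i`. -/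
theorem stmt7 {Ω : Type*} {F : MeasurableSpace Ω} (μ : Measure Ω) [IsProbabilityMeasure μ]
    {p : ℕ}
    (m : MeasurableSpace Ω) (hm : m ≤ F)
    (H : Submodule ℝ (Lp ℝ 2 μ)) (hH : IsClosed (H : Set (Lp ℝ 2 μ))) [CompleteSpace H]
    (hHmeas : ∀ f : Lp ℝ 2 μ, f ∈ H → AEStronglyMeasurable[m] (f : Ω → ℝ) μ)
    (X : Fin p → Lp ℝ 2 μ)
    (ce : Fin p → Lp ℝ 2 μ) (hce : ∀ i, ce i = (condExpL2 ℝ ℝ hm (X i) : Lp ℝ 2 μ))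
    (η : Fin p → Lp ℝ 2 μ)
    (hη : ∀ i, η i = (H.orthogonalProjectionOnto (ce i) : Lp ℝ 2 μ))
    (c : ℝ) (hc : 0 < c)
    (A B : Matrix (Fin p) (Fin p) ℝ)
    (hA : A = Matrix.of fun i j : Fin p =>
      c * ∫ ω, ((X i : Ω → ℝ) ω - (η i : Ω → ℝ) ω)
            * ((X j : Ω → ℝ) ω - (η j : Ω → ℝ) ω) ∂μ)
    (hB : B = Matrix.of fun i j : Fin p =>
      c * ∫ ω, ((X i : Ω → ℝ) ω - (ce i : Ω → ℝ) ω)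
            * ((X j : Ω → ℝ) ω - (ce j : Ω → ℝ) ω) ∂μ)
    (hBpos : B.PosDef) :
    A.PosDef ∧ (B⁻¹ - A⁻¹).PosSemidef ∧ (A⁻¹ = B⁻¹ ↔ ∀ i, η i = ce i) := by
  classical
  -- integrals as inner products
  have hip : ∀ f g : Lp ℝ 2 μ, (∫ ω, (f : Ω → ℝ) ω * (g : Ω → ℝ) ω ∂μ) = (inner ℝ f g : ℝ) := by
    intro f g
    rw [@MeasureTheory.L2.inner_def Ω ℝ ℝ _ F μ _ _ f g]
    simp [RCLike.inner_apply, mul_comm]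
  have hint : ∀ f g f' g' : Lp ℝ 2 μ,
      (∫ ω, ((f : Ω → ℝ) ω - (g : Ω → ℝ) ω) * ((f' : Ω → ℝ) ω - (g' : Ω → ℝ) ω) ∂μ)
        = (inner ℝ (f - g) (f' - g') : ℝ) := by
    intro f g f' g'
    rw [← hip]
    refine integral_congr_ae ?_
    filter_upwards [Lp.coeFn_sub f g, Lp.coeFn_sub f' g'] with ω h1 h2
    rw [h1, h2, Pi.sub_apply, Pi.sub_apply]
  -- measurability facts
  have hcem : ∀ i, AEStronglyMeasurable[m] ((ce i : Ω → ℝ)) μ := fun i => by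
    rw [hce i]; exact lpMeas.aestronglyMeasurable _
  have hηm : ∀ i, AEStronglyMeasurable[m] ((η i : Ω → ℝ)) μ := fun i =>
    hHmeas _ (by rw [hη i]; exact SetLike.coe_mem _)
  have hdm : ∀ i, AEStronglyMeasurable[m] ((ce i - η i : Lp ℝ 2 μ) : Ω → ℝ) μ := fun i =>
    AEStronglyMeasurable.congr ((hcem i).sub (hηm i)) (Lp.coeFn_sub (ce i) (η i)).symm
  -- orthogonality
  have horth : ∀ i j, (inner ℝ (X i - ce i) (ce j - η j) : ℝ) = 0 := by
    intro i j
    set g : Lp ℝ 2 μ := ce j - η j with hgdef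
    have hgm : AEStronglyMeasurable[m] (g : Ω → ℝ) μ := hdm j
    have h1 : (inner ℝ (ce i) g : ℝ) = inner ℝ (X i) g := by
      rw [hce i]; exact inner_condExpL2_eq_inner_fun hm (X i) g hgm
    rw [inner_sub_left, h1, sub_self]
  -- matrix entries
  have hAe : ∀ i j, A i j = c * (inner ℝ (X i - η i) (X j - η j) : ℝ) := by
    intro i j; rw [hA]; simp only [Matrix.of_apply]; rw [hint]
  have hBe : ∀ i j, B i j = c * (inner ℝ (X i - ce i) (X j - ce j) : ℝ) := by
    intro i j; rw [hB]; simp only [Matrix.of_apply]; rw [hint]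
  have hsplit : ∀ i j, (inner ℝ (X i - η i) (X j - η j) : ℝ)
      = inner ℝ (X i - ce i) (X j - ce j) + inner ℝ (ce i - η i) (ce j - η j) := by
    intro i j
    have h1 : X i - η i = (X i - ce i) + (ce i - η i) := (sub_add_sub_cancel _ _ _).symm
    have h2 : X j - η j = (X j - ce j) + (ce j - η j) := (sub_add_sub_cancel _ _ _).symm
    rw [h1, h2, inner_add_left, inner_add_right, inner_add_right, horth i j,
      real_inner_comm (X j - ce j) (ce i - η i), horth j i]
    ring
  set G : Matrix (Fin p) (Fin p) ℝ :=
    Matrix.of (fun i j => c * (inner ℝ (ce i - η i) (ce j - η j) : ℝ)) with hGdef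
  have hAB : A = B + G := by
    ext i j
    rw [Matrix.add_apply, hAe i j, hBe i j, hsplit i j, hGdef]
    simp only [Matrix.of_apply]
    ring
  have hGpsd : G.PosSemidef := by
    refine Matrix.PosSemidef.of_dotProduct_mulVec_nonneg ?_ ?_
    · ext i j
      simp only [hGdef, Matrix.conjTranspose_apply, Matrix.of_apply, star_trivial]
      rw [real_inner_comm]
    · intro x
      have hx : dotProduct (star x) (G.mulVec x)
          = c * (inner ℝ (∑ i, x i • (ce i - η i)) (∑ j, x j • (ce j - η j)) : ℝ) := by
        simp only [star_trivial, dotProduct, Matrix.mulVec, hGdef, Matrix.of_apply,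
          sum_inner, inner_sum, real_inner_smul_left, real_inner_smul_right]
        rw [Finset.mul_sum]
        refine Finset.sum_congr rfl fun i _ => ?_
        rw [Finset.mul_sum, Finset.mul_sum]
        refine Finset.sum_congr rfl fun j _ => ?_
        rw [real_inner_comm (ce j - η j) (ce i - η i)]
        ring
      rw [hx]
      exact mul_nonneg hc.le real_inner_self_nonneg
  have hApos : A.PosDef := by rw [hAB]; exact hBpos.add_posSemidef hGpsd
  have hAdet : IsUnit A.det := hApos.det_pos.ne'.isUnit
  have hBdet : IsUnit B.det := hBpos.det_pos.ne'.isUnit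
  have hABG : A - B = G := by rw [hAB, add_sub_cancel_left]
  have key : B⁻¹ - A⁻¹ = A⁻¹ * G * A⁻¹ + A⁻¹ * G * B⁻¹ * G * A⁻¹ := by
    have := invdiff A B A⁻¹ B⁻¹ (Matrix.mul_nonsing_inv A hAdet)
      (Matrix.nonsing_inv_mul A hAdet) (Matrix.mul_nonsing_inv B hBdet)
      (Matrix.nonsing_inv_mul B hBdet)
    rwa [hABG] at this
  refine ⟨hApos, ?_, ?_⟩
  · rw [key]
    have hAinvH : (A⁻¹)ᴴ = A⁻¹ := hApos.inv.isHermitian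
    have h1 : ((A⁻¹)ᴴ * G * A⁻¹).PosSemidef := hGpsd.conjTranspose_mul_mul_same A⁻¹
    have h2 : ((G * A⁻¹)ᴴ * B⁻¹ * (G * A⁻¹)).PosSemidef :=
      hBpos.inv.posSemidef.conjTranspose_mul_mul_same _
    have e : A⁻¹ * G * A⁻¹ + A⁻¹ * G * B⁻¹ * G * A⁻¹
        = (A⁻¹)ᴴ * G * A⁻¹ + (G * A⁻¹)ᴴ * B⁻¹ * (G * A⁻¹) := by
      rw [Matrix.conjTranspose_mul, hAinvH, hGpsd.1]
      noncomm_ring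
    rw [e]
    exact h1.add h2
  · constructor
    · intro hinv i
      have hABeq : A = B := by
        calc A = A⁻¹⁻¹ := (Matrix.nonsing_inv_nonsing_inv A hAdet).symm
          _ = B⁻¹⁻¹ := by rw [hinv]
          _ = B := Matrix.nonsing_inv_nonsing_inv B hBdet
      have hG0 : G = 0 := by rw [← hABG, hABeq, sub_self]
      have hGi : G i i = 0 := by rw [hG0]; simp
      rw [hGdef] at hGi
      simp only [Matrix.of_apply] at hGi
      have h0 : (inner ℝ (ce i - η i) (ce i - η i) : ℝ) = 0 := by
        rcases mul_eq_zero.mp hGi with h | h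
        · exact absurd h hc.ne'
        · exact h
      have hz : ce i - η i = 0 := inner_self_eq_zero.mp h0
      exact (sub_eq_zero.mp hz).symm
    · intro hall
      have hABeq : A = B := by
        rw [hA, hB]
        ext i j
        simp only [Matrix.of_apply]
        rw [hall i, hall j]
      rw [hABeq]
end

section
/- Let g : ℝ → [0, ∞) be a measurable probability density (∫ g(x) dx = 1) with ∫ |x|^r g(x) dx < ∞ for some r > 2, and let M > 0. Then there exist constants δ ∈ (0, 1) and C₁ > 0 such that for every η ∈ (0, 1] there is a finite set S of measurable functions from ℝ to ℝ with cardinality at most exp(C₁ η^{−(2−δ)}) such that every f : ℝ → ℝ with sup_x |f(x)| ≤ M and |f(x) − f(y)| ≤ M|x − y| for all x, y (i.e., Lipschitz with constant M) admits s ∈ S with ∫ (f(x) − s(x))² g(x) dx ≤ η². -/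
open MeasureTheory

set_option maxHeartbeats 2000000 in
/-- Entropy bound of Lemma 1: for a probability density `g` with a finite moment of order
`r > 2`, the class of functions bounded by `M` and `M`-Lipschitz admits, for each
`η ∈ (0,1]`, an `η`-net in `L²(g)` of cardinality at most `exp(C₁ η^{−(2−δ)})` for some
constants `δ ∈ (0,1)` and `C₁ > 0`. -/
theorem stmt15 (g : ℝ → ℝ) (hg : Measurable g) (hg0 : ∀ x, 0 ≤ g x)
    (hgint : Integrable g) (hgone : (∫ x, g x) = 1)
    (r : ℝ) (hr : 2 < r) (hmom : Integrable (fun x => |x| ^ r * g x))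
    (M : ℝ) (hM : 0 < M) :
    ∃ δ : ℝ, δ ∈ Set.Ioo (0 : ℝ) 1 ∧ ∃ C₁ : ℝ, 0 < C₁ ∧
      ∀ η : ℝ, 0 < η → η ≤ 1 →
        ∃ S : Finset (ℝ → ℝ),
          (∀ s ∈ S, Measurable s) ∧
          (S.card : ℝ) ≤ Real.exp (C₁ * η ^ (-(2 - δ))) ∧
          ∀ f : ℝ → ℝ,
            (∀ x, |f x| ≤ M) → (∀ x y : ℝ, |f x - f y| ≤ M * |x - y|) →
            ∃ s ∈ S, (∫ x, (f x - s x) ^ 2 * g x) ≤ η ^ 2 := by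
  classical
  have hr0 : (0:ℝ) < r := by linarith
  have h2r : 2 / r < 1 := (div_lt_one hr0).mpr hr
  have h2r0 : 0 < 2 / r := by positivity
  set A := ∫ x, |x| ^ r * g x with hA
  have hA0 : 0 ≤ A :=
    integral_nonneg fun x => mul_nonneg (Real.rpow_nonneg (abs_nonneg x) r) (hg0 x)
  have hA1 : (0:ℝ) < A + 1 := by linarith
  set δ := (1 - 2 / r) / 2 with hδdef
  have hδ0 : 0 < δ := by rw [hδdef]; linarith
  have hδ1 : δ < 1 := by rw [hδdef]; linarith
  have hbase : (0:ℝ) < 2 * M ^ 2 * (A + 1) := mul_pos (by positivity) hA1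
  set B := (2 * M ^ 2 * (A + 1)) ^ (1 / r : ℝ) with hBdef
  have hB : 0 < B := Real.rpow_pos_of_pos hbase _
  have hlog0 : 0 ≤ Real.log (8 * M + 2) := Real.log_nonneg (by linarith)
  set L := Real.log (8 * M + 2) + 1 / δ with hLdef
  have hL : 0 < L := by
    rw [hLdef]
    have : 0 < 1 / δ := by positivity
    linarith
  have hMB : (0:ℝ) < 8 * M * B + 1 := by nlinarith
  set C₁ := (8 * M * B + 1) * L with hC₁def
  clear_value A δ B L C₁
  refine ⟨δ, ⟨hδ0, hδ1⟩, C₁, by rw [hC₁def]; exact mul_pos hMB hL, ?_⟩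
  intro η hη0 hη1
  set T := B * η ^ (-(2 / r)) with hTdef
  have hT : 0 < T := mul_pos hB (Real.rpow_pos_of_pos hη0 _)
  have hTr : T ^ (r : ℝ) = 2 * M ^ 2 * (A + 1) / η ^ 2 := by
    have h1 : ((2 * M ^ 2 * (A + 1)) ^ (1 / r : ℝ)) ^ (r:ℝ) = 2 * M ^ 2 * (A + 1) := by
      rw [← Real.rpow_mul hbase.le, one_div, inv_mul_cancel₀ (ne_of_gt hr0), Real.rpow_one]
    have h2 : (η ^ (-(2 / r) : ℝ)) ^ (r:ℝ) = (η ^ 2)⁻¹ := by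
      rw [← Real.rpow_mul hη0.le]
      have h3 : -(2 / r) * r = -2 := by field_simp
      rw [h3, show ((-2:ℝ)) = -((2:ℕ):ℝ) by norm_num, Real.rpow_neg hη0.le, Real.rpow_natCast]
    rw [hTdef, hBdef,
      Real.mul_rpow (Real.rpow_nonneg hbase.le _) (Real.rpow_nonneg hη0.le _), h1, h2,
      div_eq_mul_inv]
  set w := η / (4 * M) with hwdef
  have hw : 0 < w := by rw [hwdef]; positivity
  set e := η / 4 with hedef
  have he : 0 < e := by rw [hedef]; positivity
  set N := ⌈2 * T / w⌉₊ with hNdef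
  have hN0 : 0 < N := Nat.ceil_pos.mpr (div_pos (by linarith) hw)
  set K := ⌈2 * M / e⌉₊ + 1 with hKdef
  have hK0 : 0 < K := by rw [hKdef]; exact Nat.succ_pos _
  clear_value T w e N K
  set ν : (Fin N → Fin K) → ℕ → ℕ := fun c m => if hm : m < N then (c ⟨m, hm⟩ : ℕ) else 0
    with hν
  set φ : (Fin N → Fin K) → ℝ → ℝ :=
    fun c x => if x ∈ Set.Ico (-T) T then -M + e * (ν c ⌊(x + T) / w⌋₊ : ℝ) else 0 with hφ
  clear_value ν φ
  have hφmeas : ∀ c, Measurable (φ c) := by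
    intro c
    rw [hφ]
    have hset : MeasurableSet {x : ℝ | x ∈ Set.Ico (-T) T} := measurableSet_Ico
    refine Measurable.ite hset ?_ measurable_const
    refine measurable_const.add (measurable_const.mul ?_)
    have h1 : Measurable fun x : ℝ => ⌊(x + T) / w⌋₊ :=
      Nat.measurable_floor.comp ((measurable_id.add_const T).div_const w)
    exact (measurable_from_nat (f := fun m : ℕ => ((ν c m : ℕ) : ℝ))).comp h1
  refine ⟨Finset.image φ Finset.univ, ?_, ?_, ?_⟩
  · intro s hs
    obtain ⟨c, -, rfl⟩ := Finset.mem_image.mp hs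
    exact hφmeas c
  · -- cardinality bound
    have hcard : (Finset.image φ Finset.univ).card ≤ K ^ N := by
      calc (Finset.image φ Finset.univ).card
          ≤ (Finset.univ : Finset (Fin N → Fin K)).card := Finset.card_image_le
        _ = K ^ N := by simp [Finset.card_univ]
    have hK1 : (1:ℝ) ≤ (K:ℝ) := by exact_mod_cast hK0
    have hlogK0 : 0 ≤ Real.log K := Real.log_nonneg hK1
    have hKexp : ((K:ℝ)) ^ N = Real.exp ((N:ℝ) * Real.log K) := by
      rw [Real.exp_nat_mul, Real.exp_log (by linarith)]
    have hηinv1 : (1:ℝ) ≤ η ^ (-(1 + 2/r)) :=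
      Real.one_le_rpow_of_pos_of_le_one_of_nonpos hη0 hη1 (by linarith)
    have hηd1 : (1:ℝ) ≤ η ^ (-δ) :=
      Real.one_le_rpow_of_pos_of_le_one_of_nonpos hη0 hη1 (by linarith)
    have hNle : (N:ℝ) ≤ (8*M*B + 1) * η ^ (-(1 + 2/r)) := by
      have h1 : (N:ℝ) < 2*T/w + 1 := by
        rw [hNdef]; exact Nat.ceil_lt_add_one (le_of_lt (div_pos (by linarith) hw))
      have hx := Real.rpow_add hη0 (-(1 + 2/r)) 1
      rw [Real.rpow_one] at hx
      have hx' : -(1 + 2/r) + 1 = -(2/r) := by ring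
      rw [hx'] at hx
      have h2 : 2*T/w = 8*M*B * η ^ (-(1+2/r)) := by
        rw [hwdef, div_div_eq_mul_div, hTdef, hx]
        field_simp
        ring
      have h3 : 8*M*B * η ^ (-(1+2/r)) + 1 ≤ (8*M*B + 1) * η ^ (-(1+2/r)) := by
        have hq : (8*M*B + 1) * η ^ (-(1+2/r)) = 8*M*B * η ^ (-(1+2/r)) + η ^ (-(1+2/r)) := by
          ring
        linarith [hηinv1]
      linarith
    have hKle : (K:ℝ) ≤ (8*M+2)/η := by
      have h1 : ((⌈2*M/e⌉₊:ℝ)) < 2*M/e + 1 :=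
        Nat.ceil_lt_add_one (le_of_lt (div_pos (by linarith) he))
      have h2 : 2*M/e = 8*M/η := by rw [hedef]; field_simp; ring
      have h3 : (2:ℝ) ≤ 2/η := by rw [le_div_iff₀ hη0]; linarith
      have h4 : (K:ℝ) = (⌈2*M/e⌉₊:ℝ) + 1 := by rw [hKdef]; push_cast; ring
      have h5 : 8*M/η + 2/η = (8*M+2)/η := by ring
      rw [h4]
      linarith [h1, h2, h3, h5]
    have hlogKle : Real.log K ≤ L * η ^ (-δ) := by
      have h1 : Real.log K ≤ Real.log ((8*M+2)/η) := Real.log_le_log (by linarith) hKle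
      have h2 : Real.log ((8*M+2)/η) = Real.log (8*M+2) - Real.log η := by
        rw [Real.log_div (by linarith) hη0.ne']
      have h3 : -Real.log η = Real.log η⁻¹ := (Real.log_inv η).symm
      have h4 : Real.log η⁻¹ ≤ (η⁻¹) ^ δ / δ :=
        Real.log_le_rpow_div (by positivity) hδ0
      have h5 : (η⁻¹) ^ δ = η ^ (-δ) := by
        rw [Real.rpow_neg hη0.le, ← Real.inv_rpow hη0.le]
      rw [h5] at h4
      have h6 : Real.log (8*M+2) + η ^ (-δ) / δ ≤ L * η ^ (-δ) := by
        rw [hLdef]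
        have hq1 : η ^ (-δ) / δ = 1/δ * η ^ (-δ) := by ring
        have hq2 : (Real.log (8*M+2) + 1/δ) * η ^ (-δ)
            = Real.log (8*M+2) * η ^ (-δ) + 1/δ * η ^ (-δ) := by ring
        linarith [mul_nonneg hlog0 (sub_nonneg.mpr hηd1)]
      linarith
    have hNK : (N:ℝ) * Real.log K ≤ C₁ * η ^ (-(2-δ)) := by
      have h1 : (N:ℝ) * Real.log K ≤ ((8*M*B+1) * η^(-(1+2/r))) * (L * η^(-δ)) :=
        mul_le_mul hNle hlogKle hlogK0
          (mul_nonneg hMB.le (Real.rpow_nonneg hη0.le _))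
      have h2 : η^(-(1+2/r)) * η^(-δ) = η^(-(2-δ)) := by
        rw [← Real.rpow_add hη0]
        congr 1
        rw [hδdef]; ring
      have h3 : ((8*M*B+1) * η^(-(1+2/r))) * (L * η^(-δ)) = C₁ * η^(-(2-δ)) := by
        rw [hC₁def, ← h2]; ring
      linarith
    calc ((Finset.image φ Finset.univ).card : ℝ) ≤ ((K ^ N : ℕ) : ℝ) := by exact_mod_cast hcard
      _ = (K:ℝ) ^ N := by push_cast; ring
      _ = Real.exp ((N:ℝ) * Real.log K) := hKexp
      _ ≤ Real.exp (C₁ * η ^ (-(2 - δ))) := Real.exp_le_exp.mpr hNK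
  · -- approximation
    intro f hfb hfl
    have hKsub : ∀ i : Fin N, ⌊(f (-T + w * (i:ℕ)) + M)/e⌋₊ < K := by
      intro i
      have h1 : (f (-T + w * (i:ℕ)) + M)/e ≤ 2*M/e :=
        (div_le_div_iff_of_pos_right he).mpr (by linarith [le_of_abs_le (hfb (-T + w * (i:ℕ)))])
      have h2 : ⌊(f (-T + w * (i:ℕ)) + M)/e⌋₊ ≤ ⌈2*M/e⌉₊ :=
        le_trans (Nat.floor_le_floor h1) (Nat.floor_le_ceil _)
      rw [hKdef]
      omega
    set c : Fin N → Fin K := fun i => ⟨⌊(f (-T + w * (i:ℕ)) + M)/e⌋₊, hKsub i⟩ with hc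
    clear_value c
    refine ⟨φ c, Finset.mem_image_of_mem φ (Finset.mem_univ c), ?_⟩
    have hTrpos : 0 < T ^ (r:ℝ) := Real.rpow_pos_of_pos hT r
    have hpt : ∀ x, (f x - φ c x)^2 * g x ≤
        η^2/4 * g x + (M^2 / T ^ (r:ℝ)) * (|x| ^ r * g x) := by
      intro x
      have hsecond : 0 ≤ (M^2 / T^(r:ℝ)) * (|x| ^ r * g x) :=
        mul_nonneg (div_nonneg (sq_nonneg M) hTrpos.le)
          (mul_nonneg (Real.rpow_nonneg (abs_nonneg x) r) (hg0 x))
      by_cases hx : x ∈ Set.Ico (-T) T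
      · have hx1 : -T ≤ x := hx.1
        have hx2 : x < T := hx.2
        have hx0 : 0 ≤ x + T := by linarith
        set m := ⌊(x+T)/w⌋₊ with hm
        clear_value m
        have hmN : m < N := by
          rw [hm, Nat.floor_lt (div_nonneg hx0 hw.le)]
          have h1 : (x+T)/w < 2*T/w := (div_lt_div_iff_of_pos_right hw).mpr (by linarith)
          have h2 : (2*T/w : ℝ) ≤ N := by rw [hNdef]; exact Nat.le_ceil _
          linarith only [h1, h2]
        set p := -T + w * (m:ℝ) with hp
        clear_value p
        have hsx : φ c x = -M + e * ((⌊(f p + M)/e⌋₊ : ℕ) : ℝ) := by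
          rw [hφ]
          simp only [if_pos hx, hν, ← hm, dif_pos hmN, hc, hp]
        have hpx1 : p ≤ x := by
          have h' : (m:ℝ) ≤ (x+T)/w := by
            rw [hm]; exact Nat.floor_le (div_nonneg hx0 hw.le)
          rw [le_div_iff₀ hw] at h'
          rw [hp]; linarith only [h']
        have hpx2 : x - p ≤ w := by
          have h' : (x+T)/w < (m:ℝ) + 1 := by
            rw [hm]; exact_mod_cast Nat.lt_floor_add_one ((x+T)/w)
          rw [div_lt_iff₀ hw] at h'
          have hq : ((m:ℝ) + 1) * w = (m:ℝ) * w + w := by ring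
          rw [hp]; linarith only [h', hq]
        have hfp : |f x - f p| ≤ M * w := by
          refine le_trans (hfl x p) ?_
          have habs' : |x - p| = x - p := abs_of_nonneg (by linarith)
          rw [habs']
          exact mul_le_mul_of_nonneg_left hpx2 hM.le
        have hvalp : 0 ≤ f p + M := by linarith only [neg_le_of_abs_le (hfb p)]
        set j := ⌊(f p + M)/e⌋₊ with hj
        clear_value j
        have hj1 : e * (j:ℝ) ≤ f p + M := by
          have h' : (j:ℝ) ≤ (f p + M)/e := by
            rw [hj]; exact Nat.floor_le (div_nonneg hvalp he.le)
          rw [le_div_iff₀ he] at h'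
          linarith only [h']
        have hj2 : f p + M < e * (j:ℝ) + e := by
          have h' : (f p + M)/e < (j:ℝ) + 1 := by
            rw [hj]; exact_mod_cast Nat.lt_floor_add_one ((f p + M)/e)
          rw [div_lt_iff₀ he] at h'
          have hq : ((j:ℝ) + 1) * e = e * (j:ℝ) + e := by ring
          linarith only [h', hq]
        have hs2 : |f p - (-M + e * (j:ℝ))| ≤ e := by
          rw [abs_le]
          constructor <;> linarith only [hj1, hj2, he]
        have hMw : M * w = η/4 := by rw [hwdef]; field_simp [hM.ne']
        have habs : |f x - φ c x| ≤ η/2 := by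
          rw [hsx]
          calc |f x - (-M + e * (j:ℝ))|
              ≤ |f x - f p| + |f p - (-M + e * (j:ℝ))| := abs_sub_le _ _ _
            _ ≤ M * w + e := add_le_add hfp hs2
            _ = η/2 := by rw [hMw, hedef]; ring
        have hsq : (f x - φ c x)^2 ≤ η^2/4 := by
          have h1 := pow_le_pow_left₀ (abs_nonneg (f x - φ c x)) habs 2
          rw [sq_abs] at h1
          have hq : (η/2)^2 = η^2/4 := by ring
          linarith only [h1, hq]
        have h2 : (f x - φ c x)^2 * g x ≤ η^2/4 * g x :=
          mul_le_mul_of_nonneg_right hsq (hg0 x)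
        linarith only [h2, hsecond]
      · have hs0 : φ c x = 0 := by rw [hφ]; simp only [if_neg hx]
        have hTx : T ≤ |x| := by
          rw [Set.mem_Ico, not_and_or, not_le, not_lt] at hx
          rcases hx with hx | hx
          · rw [abs_of_neg (by linarith only [hx, hT])]; linarith only [hx]
          · exact le_trans hx (le_abs_self x)
        have hfx2 : (f x)^2 ≤ M^2 := by
          have h1 := le_of_abs_le (hfb x)
          have h2 := neg_le_of_abs_le (hfb x)
          exact sq_le_sq' (by linarith only [h2]) h1
        have hxr : T ^ (r:ℝ) ≤ |x| ^ r := Real.rpow_le_rpow hT.le hTx hr0.le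
        have hM2 : M^2 ≤ M^2 / T^(r:ℝ) * |x| ^ r := by
          rw [div_mul_eq_mul_div, le_div_iff₀ hTrpos]
          exact mul_le_mul_of_nonneg_left hxr (sq_nonneg M)
        rw [hs0]
        have h3 : (f x - 0)^2 * g x ≤ (M^2 / T^(r:ℝ) * |x| ^ r) * g x := by
          apply mul_le_mul_of_nonneg_right ?_ (hg0 x)
          simpa using le_trans hfx2 hM2
        have h0 : 0 ≤ η^2/4 * g x := mul_nonneg (by positivity) (hg0 x)
        have h4 : (M^2 / T^(r:ℝ) * |x| ^ r) * g x = (M^2 / T^(r:ℝ)) * (|x| ^ r * g x) := by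
          ring
        linarith only [h3, h0, h4, hsecond]
    have hint1 : Integrable (fun x => η^2/4 * g x) := hgint.const_mul _
    have hint2 : Integrable (fun x => (M^2 / T^(r:ℝ)) * (|x| ^ r * g x)) := hmom.const_mul _
    have hle : (∫ x, (f x - φ c x)^2 * g x) ≤
        ∫ x, (η^2/4 * g x + (M^2 / T^(r:ℝ)) * (|x| ^ r * g x)) :=
      integral_mono_of_nonneg
        (Filter.Eventually.of_forall fun x => mul_nonneg (sq_nonneg _) (hg0 x))
        (hint1.add hint2) (Filter.Eventually.of_forall hpt)
    rw [integral_add hint1 hint2, integral_const_mul, integral_const_mul, hgone, ← hA] at hle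
    have hfin : η^2/4 * 1 + M^2 / T^(r:ℝ) * A ≤ η^2 := by
      have hkey : M^2 / T^(r:ℝ) * A ≤ η^2/2 := by
        rw [hTr, div_div_eq_mul_div, div_mul_eq_mul_div, div_le_iff₀ (by positivity)]
        have hq : η^2/2 * (2*M^2*(A+1)) = M^2 * η^2 * A + M^2 * η^2 := by ring
        linarith only [hq, mul_nonneg (sq_nonneg M) (sq_nonneg η)]
      linarith only [hkey, sq_nonneg η]
    linarith only [hle, hfin]
end

section
/- Let μ be a probability measure on [0,1]^d whose density with respect to Lebesgue measure is bounded below by a constant c > 0, and let μ_j denote the j-th coordinate marginal of μ. Suppose m_j ∈ L¹(μ_j) for j = 1, …, d satisfy ∫ m_j dμ_j = 0 for each j, and Σ_{j=1}^d m_j(z_j) = 0 for μ-almost every z = (z₁, …, z_d) ∈ [0,1]^d. Then for each j, m_j = 0 μ_j-almost everywhere. -/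
open MeasureTheory BigOperators

section AuxPi

variable {d : ℕ}

/-- Integrability of a product of single-coordinate integrable functions
w.r.t. a finite product of copies of a measure on `ℝ`. -/
lemma auxPi_integrable (ν : Measure ℝ) [SigmaFinite ν] (f : Fin d → ℝ → ℝ)
    (hf : ∀ i, Integrable (f i) ν) :
    Integrable (fun x : Fin d → ℝ => ∏ i, f i (x i)) (Measure.pi fun _ => ν) := by
  letI : MeasureSpace ℝ := ⟨ν⟩
  haveI : SigmaFinite (volume : Measure ℝ) := ‹_›
  exact MeasureTheory.Integrable.fintype_prod (𝕜 := ℝ) (f := f) hf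

/-- Fubini for a product of single-coordinate functions
w.r.t. a finite product of copies of a measure on `ℝ`. -/
lemma auxPi_integral (ν : Measure ℝ) [SigmaFinite ν] (f : Fin d → ℝ → ℝ) :
    ∫ x : Fin d → ℝ, ∏ i, f i (x i) ∂(Measure.pi fun _ => ν)
      = ∏ i, ∫ x, f i x ∂ν := by
  letI : MeasureSpace ℝ := ⟨ν⟩
  haveI : SigmaFinite (volume : Measure ℝ) := ‹_›
  exact MeasureTheory.integral_fintype_prod_eq_prod (ι := Fin d) f

end AuxPi

/-- Identifiability of the additive components: if `μ` is a probability measure on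
`[0,1]^d` with Lebesgue density bounded below by `c > 0`, the `mⱼ` are integrable with
`∫ mⱼ dμⱼ = 0`, and `Σⱼ mⱼ(zⱼ) = 0` for `μ`-a.e. `z`, then each `mⱼ = 0` `μⱼ`-a.e. -/
theorem stmt17 (d : ℕ) (μ : Measure (Fin d → ℝ)) [IsProbabilityMeasure μ]
    (c : ℝ) (hc : 0 < c)
    (ρ : (Fin d → ℝ) → ENNReal) (hρ : Measurable ρ)
    (hμ : μ = (volume.restrict
        (Set.univ.pi fun _ : Fin d => Set.Icc (0 : ℝ) 1)).withDensity ρ)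
    (hlow : ∀ z ∈ (Set.univ.pi fun _ : Fin d => Set.Icc (0 : ℝ) 1),
        ENNReal.ofReal c ≤ ρ z)
    (m : Fin d → ℝ → ℝ)
    (hint : ∀ j, Integrable (m j) (μ.map fun z => z j))
    (hcen : ∀ j, (∫ t, m j t ∂(μ.map fun z => z j)) = 0)
    (hzero : ∀ᵐ z ∂μ, (∑ j, m j (z j)) = 0) :
    ∀ j, m j =ᵐ[μ.map fun z => z j] 0 := by
  classical
  set Icube : Set (Fin d → ℝ) := Set.univ.pi fun _ : Fin d => Set.Icc (0 : ℝ) 1 with hIcube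
  set ν : Measure ℝ := volume.restrict (Set.Icc (0 : ℝ) 1) with hν
  haveI : IsProbabilityMeasure ν := by
    constructor
    rw [hν, Measure.restrict_apply_univ]
    simp [Real.volume_Icc]
  set P : Measure (Fin d → ℝ) := Measure.pi fun _ : Fin d => ν with hPdef
  have hcube_meas : MeasurableSet Icube :=
    MeasurableSet.univ_pi fun _ => measurableSet_Icc
  -- the restricted Lebesgue measure on the cube is the product measure `P`
  have hP : volume.restrict Icube = P := by
    refine (Measure.pi_eq fun s hs => ?_).symm
    rw [Measure.restrict_apply (MeasurableSet.univ_pi hs), hIcube,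
      ← Set.pi_inter_distrib, volume_pi_pi]
    exact Finset.prod_congr rfl fun i _ => (Measure.restrict_apply (hs i)).symm
  -- marginals of `P`
  have hPmarg : ∀ k : Fin d, P.map (fun z : Fin d → ℝ => z k) = ν := by
    intro k
    ext s hs
    rw [Measure.map_apply (measurable_pi_apply k) hs]
    have hpre : (fun z : Fin d → ℝ => z k) ⁻¹' s
        = Set.pi Set.univ (Function.update (fun _ => Set.univ) k s) := by
      ext z
      simp only [Set.mem_preimage, Set.mem_univ_pi, Function.update_apply]
      constructor
      · intro h i
        split <;> simp_all
      · intro h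
        simpa using h k
    rw [hpre, hPdef, Measure.pi_pi]
    rw [Finset.prod_eq_single k
      (fun i _ hik => by simp [Function.update_apply, hik]) (by simp)]
    simp [Function.update_apply]
  -- lower bound : `c • (volume.restrict cube) ≤ μ`
  have hle : ENNReal.ofReal c • (volume.restrict Icube) ≤ μ := by
    rw [Measure.le_iff]
    intro s hs
    rw [hμ, withDensity_apply ρ hs, Measure.smul_apply, smul_eq_mul,
      ← setLIntegral_const s (ENNReal.ofReal c)]
    refine lintegral_mono_ae ?_
    refine ae_restrict_of_ae ?_
    exact (ae_restrict_iff' hcube_meas).2 (ae_of_all _ hlow)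
  have hleP : ENNReal.ofReal c • P ≤ μ := hP ▸ hle
  have hc0 : (ENNReal.ofReal c) ≠ 0 := (ENNReal.ofReal_pos.2 hc).ne'
  -- `P ≪ μ`
  have hPμ : P ≪ μ := by
    refine Measure.AbsolutelyContinuous.mk fun s hs h0 => ?_
    have h1 : (ENNReal.ofReal c • P) s ≤ μ s := hleP s
    rw [h0, Measure.smul_apply, smul_eq_mul, le_zero_iff, mul_eq_zero] at h1
    exact h1.resolve_left hc0
  -- marginal lower bound, for every coordinate
  have hleν : ∀ k : Fin d, ENNReal.ofReal c • ν ≤ μ.map (fun z : Fin d → ℝ => z k) := by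
    intro k
    have h1 : (ENNReal.ofReal c • P).map (fun z : Fin d → ℝ => z k)
        ≤ μ.map (fun z : Fin d → ℝ => z k) :=
      Measure.map_mono hleP (measurable_pi_apply k)
    rwa [Measure.map_smul, hPmarg k] at h1
  -- `ν ≪ μ.map (eval k)` and `μ.map (eval k) ≪ ν`
  have hνμk : ∀ k : Fin d, ν ≪ μ.map (fun z : Fin d → ℝ => z k) := by
    intro k
    refine Measure.AbsolutelyContinuous.mk fun s hs h0 => ?_
    have h1 : (ENNReal.ofReal c • ν) s ≤ (μ.map (fun z : Fin d → ℝ => z k)) s := hleν k s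
    rw [h0, Measure.smul_apply, smul_eq_mul, le_zero_iff, mul_eq_zero] at h1
    exact h1.resolve_left hc0
  have hμP : μ ≪ P := by
    rw [hμ, ← hP]
    exact withDensity_absolutelyContinuous _ ρ
  have hμkν : ∀ k : Fin d, (μ.map fun z : Fin d → ℝ => z k) ≪ ν := by
    intro k
    have := hμP.map (measurable_pi_apply k)
    rwa [hPmarg k] at this
  -- integrability w.r.t. `ν`
  have hintν : ∀ k, Integrable (m k) ν := by
    intro k
    have h2 : Integrable (m k) ((ENNReal.ofReal c)⁻¹ • (μ.map fun z : Fin d → ℝ => z k)) :=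
      (hint k).smul_measure (by simp [ENNReal.inv_ne_top, hc0])
    refine h2.mono_measure ?_
    intro s
    have h3 : ENNReal.ofReal c * ν s ≤ (μ.map fun z : Fin d → ℝ => z k) s := by
      have := hleν k s
      rwa [Measure.smul_apply, smul_eq_mul] at this
    calc ν s = (ENNReal.ofReal c)⁻¹ * (ENNReal.ofReal c * ν s) := by
          rw [← mul_assoc, ENNReal.inv_mul_cancel hc0 ENNReal.ofReal_ne_top, one_mul]
      _ ≤ (ENNReal.ofReal c)⁻¹ * ((μ.map fun z : Fin d → ℝ => z k) s) :=
          mul_le_mul_right h3 _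
      _ = ((ENNReal.ofReal c)⁻¹ • (μ.map fun z : Fin d → ℝ => z k)) s := by
          rw [Measure.smul_apply, smul_eq_mul]
  -- the a.e. vanishing of the sum transfers to `P`
  have hzeroP : ∀ᵐ z ∂P, (∑ k, m k (z k)) = 0 := hzero.filter_mono hPμ.ae_le
  -- the means w.r.t. `ν`
  set a : Fin d → ℝ := fun k => ∫ t, m k t ∂ν with ha
  intro j
  -- main step: test against indicators of measurable sets
  have hkey : ∀ s : Set ℝ, MeasurableSet s →
      (∫ t in s, m j t ∂ν) + (∑ k ∈ Finset.univ.erase j, a k) * (ν s).toReal = 0 := by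
    intro s hs
    set g : ℝ → ℝ := s.indicator (fun _ => (1 : ℝ)) with hg
    have hgint : Integrable g ν := (integrable_const (1 : ℝ)).indicator hs
    have hmg : ∀ k, (fun t => m k t * g t) = s.indicator (m k) := by
      intro k
      funext t
      by_cases ht : t ∈ s <;> simp [hg, Set.indicator_apply, ht]
    -- the single-coordinate factors
    set f : Fin d → Fin d → ℝ → ℝ := fun k i t =>
      (if i = k then m k t else 1) * (if i = j then g t else 1) with hf
    have hprod : ∀ k (z : Fin d → ℝ), (∏ i, f k i (z i)) = m k (z k) * g (z j) := by
      intro k z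
      rw [hf]
      simp only
      rw [Finset.prod_mul_distrib, Fintype.prod_ite_eq' k (fun i => m k (z i)),
        Fintype.prod_ite_eq' j (fun i => g (z i))]
    have hfint : ∀ k i, Integrable (f k i) ν := by
      intro k i
      by_cases h1 : i = k <;> by_cases h2 : i = j
      · simp only [hf, if_pos h1, if_pos h2]
        simpa [hmg k] using (hintν k).indicator hs
      · simp only [hf, if_pos h1, if_neg h2, mul_one]
        exact hintν k
      · simp only [hf, if_neg h1, if_pos h2, one_mul]
        exact hgint
      · simp only [hf, if_neg h1, if_neg h2, mul_one]
        exact integrable_const 1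
    have hPint : ∀ k, Integrable (fun z : Fin d → ℝ => m k (z k) * g (z j)) P := by
      intro k
      have := auxPi_integrable ν (f k) (hfint k)
      refine this.congr (ae_of_all _ fun z => ?_)
      exact (hprod k z)
    -- value of each summand integral
    have hval : ∀ k, (∫ z : Fin d → ℝ, m k (z k) * g (z j) ∂P)
        = if k = j then ∫ t in s, m j t ∂ν else a k * (ν s).toReal := by
      intro k
      have h1 : (∫ z : Fin d → ℝ, m k (z k) * g (z j) ∂P)
          = ∏ i, ∫ t, f k i t ∂ν := by
        rw [← auxPi_integral ν (f k)]
        exact integral_congr_ae (ae_of_all _ fun z => (hprod k z).symm)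
      rw [h1]
      by_cases hkj : k = j
      · rw [if_pos hkj]
        have h2 : ∀ i, (∫ t, f k i t ∂ν) = if i = k then ∫ t in s, m j t ∂ν else 1 := by
          intro i
          by_cases h3 : i = k
          · rw [if_pos h3]
            have hfe : f k i = s.indicator (m k) := by
              rw [← hmg k]
              funext t
              simp only [hf]
              simp [h3, hkj]
            rw [hfe, integral_indicator hs, hkj]
          · rw [if_neg h3]
            have hfe : f k i = fun _ => (1 : ℝ) := by
              funext t
              simp only [hf]
              simp [h3, show ¬ i = j from fun h => h3 (h.trans hkj.symm)]
            rw [hfe]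
            simp
        simp_rw [h2]
        rw [Fintype.prod_ite_eq' k (fun _ => ∫ t in s, m j t ∂ν)]
      · rw [if_neg hkj]
        set I : Fin d → ℝ := fun i => ∫ t, f k i t ∂ν with hI
        have hIk : I k = a k := by
          have hfe : f k k = m k := by
            funext t
            simp only [hf]
            simp [hkj]
          simp only [hI]
          rw [hfe]
        have hIj : I j = (ν s).toReal := by
          have hfe : f k j = g := by
            funext t
            simp only [hf]
            simp [show ¬ j = k from fun h => hkj h.symm]
          simp only [hI]
          rw [hfe, hg, integral_indicator_const (1 : ℝ) hs]
          simp
          rfl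
        have hI1 : ∀ i, i ≠ k → i ≠ j → I i = 1 := by
          intro i h1 h2
          have hfe : f k i = fun _ => (1 : ℝ) := by
            funext t
            simp only [hf]
            simp [h1, h2]
          simp only [hI]
          rw [hfe]
          simp
        have hjk : j ∈ Finset.univ.erase k :=
          Finset.mem_erase.2 ⟨fun h => hkj h.symm, Finset.mem_univ j⟩
        calc (∏ i, I i) = I k * ∏ i ∈ Finset.univ.erase k, I i :=
              (Finset.mul_prod_erase _ _ (Finset.mem_univ k)).symm
          _ = I k * (I j * ∏ i ∈ (Finset.univ.erase k).erase j, I i) := by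
              rw [Finset.mul_prod_erase _ _ hjk]
          _ = I k * (I j * 1) := by
              rw [Finset.prod_eq_one]
              intro i hi
              rcases Finset.mem_erase.1 hi with ⟨hij, hi2⟩
              rcases Finset.mem_erase.1 hi2 with ⟨hik, _⟩
              exact hI1 i hik hij
          _ = a k * (ν s).toReal := by rw [hIk, hIj, mul_one]
    -- the sum of the integrals vanishes
    have hsum : (∑ k, ∫ z : Fin d → ℝ, m k (z k) * g (z j) ∂P) = 0 := by
      rw [← integral_finset_sum _ (fun k _ => hPint k)]
      have h0 : (fun z : Fin d → ℝ => ∑ k, m k (z k) * g (z j)) =ᵐ[P] 0 := by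
        refine hzeroP.mono fun z hz => ?_
        simp [← Finset.sum_mul, hz]
      rw [integral_congr_ae h0]
      simp
    -- put things together
    have h4 : (∑ k, if k = j then ∫ t in s, m j t ∂ν else a k * (ν s).toReal) = 0 := by
      rw [← hsum]
      exact Finset.sum_congr rfl fun k _ => (hval k).symm
    rw [← h4]
    rw [← Finset.add_sum_erase _ _ (Finset.mem_univ j), if_pos rfl]
    congr 1
    rw [Finset.sum_mul]
    exact Finset.sum_congr rfl fun k hk => by
      rw [if_neg (Finset.mem_erase.1 hk).1]
  -- conclude that `m j + b` vanishes `ν`-a.e.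
  set b : ℝ := ∑ k ∈ Finset.univ.erase j, a k with hb
  have hzb : (fun t => m j t + b) =ᵐ[ν] 0 := by
    refine Integrable.ae_eq_zero_of_forall_setIntegral_eq_zero
      ((hintν j).add (integrable_const b)) fun s hs _ => ?_
    rw [integral_add ((hintν j).integrableOn) (integrable_const b).integrableOn,
      setIntegral_const]
    have := hkey s hs
    rw [smul_eq_mul, mul_comm]
    have hr : ν.real s = (ν s).toReal := rfl
    rw [hr]
    linarith
  -- transfer to the marginal of `μ` and use the centering
  have hzbμ : (fun t => m j t + b) =ᵐ[μ.map fun z : Fin d → ℝ => z j] 0 :=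
    hzb.filter_mono (hμkν j).ae_le
  haveI : IsProbabilityMeasure (μ.map fun z : Fin d → ℝ => z j) :=
    Measure.isProbabilityMeasure_map (measurable_pi_apply j).aemeasurable
  have hbz : b = 0 := by
    have h5 : (∫ t, (m j t + b) ∂(μ.map fun z : Fin d → ℝ => z j)) = 0 := by
      rw [integral_congr_ae hzbμ]
      simp
    rw [integral_add (hint j) (integrable_const b), hcen j, integral_const] at h5
    simpa using h5
  refine hzbμ.mono fun t ht => ?_
  simpa [hbz] using ht
end
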